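/- arXiv:0908.0783 — 4 statements merged into one kernel-verified Lean document; each statement's English description precedes it below -/
import Mathlib

section
/- Let P be a finite metacyclic 2-group. If P is a nontrivial homocyclic group or a quaternion group of order 8, then the automorphism group Aut(P) is not a 2-group (i.e. |Aut(P)| is divisible by an odd prime). -/
/-- A group is *metacyclic* if it has a cyclic normal subgroup with cyclic quotient. -/
def IsMetacyclic (P : Type*) [Group P] : Prop :=
  ∃ (N : Subgroup P) (hN : N.Normal), IsCyclic N ∧
    letI := hN
    IsCyclic (P ⧸ N)

/-- A group is *homocyclic* if it is a direct product of two isomorphic cyclic groups. -/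
def IsHomocyclic (P : Type*) [Group P] : Prop :=
  ∃ n : ℕ, Nonempty (P ≃* (Multiplicative (ZMod n) × Multiplicative (ZMod n)))

/-- A finite `2`-group of order `2 ^ n` has *maximal class* if its nilpotency class is `n - 1`;
these are exactly the dihedral, semidihedral and generalized quaternion groups of order
at least `8` (so `n ≥ 3`).  The nilpotency class equals `n - 1` iff the `(n-1)`-st term of the
lower central series is trivial while the `(n-2)`-nd is not. -/
def IsMaximalClassTwoGroup (P : Type*) [Group P] : Prop :=
  ∃ n : ℕ, 3 ≤ n ∧ Nat.card P = 2 ^ n ∧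
    (⊤ : Subgroup P).lowerCentralSeries (n - 1) = ⊥ ∧ (⊤ : Subgroup P).lowerCentralSeries (n - 2) ≠ ⊥

/-- A group is *2-nilpotent* if it has a normal subgroup of odd order whose quotient
is a `2`-group (a normal `2`-complement). -/
def IsTwoNilpotent (G : Type*) [Group G] : Prop :=
  ∃ (N : Subgroup G) (hN : N.Normal), Odd (Nat.card N) ∧
    letI := hN
    IsPGroup 2 (G ⧸ N)


/-- The order-3 automorphism `(x, y) ↦ (y, (xy)⁻¹)` of a homocyclic group. -/
private def triAut (n : ℕ) : MulAut (Multiplicative (ZMod n) × Multiplicative (ZMod n)) where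
  toFun p := (p.2, (p.1 * p.2)⁻¹)
  invFun p := ((p.1 * p.2)⁻¹, p.1)
  left_inv p := by
    ext
    · simp
    · simp
  right_inv p := by
    ext
    · simp
    · simp
  map_mul' p q := by
    ext
    · simp
    · simp only [Prod.snd_mul, ← mul_inv]
      congr 1
      exact congrArg (·⁻¹) (mul_mul_mul_comm p.1 q.1 p.2 q.2)

private def q8f : QuaternionGroup 2 → QuaternionGroup 2 := fun x =>
  match x with
  | .a i => ![QuaternionGroup.a 0, QuaternionGroup.xa 0, QuaternionGroup.a 2, QuaternionGroup.xa 2] i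
  | .xa i => ![QuaternionGroup.xa 3, QuaternionGroup.a 3, QuaternionGroup.xa 1, QuaternionGroup.a 1] i

private lemma q8f_cube : ∀ x : QuaternionGroup 2, q8f (q8f (q8f x)) = x := by decide

/-- The order-3 automorphism of `Q₈` permuting `i, j, k` cyclically. -/
private def q8Aut : MulAut (QuaternionGroup 2) where
  toFun := q8f
  invFun := q8f ∘ q8f
  left_inv x := q8f_cube x
  right_inv x := q8f_cube x
  map_mul' := by decide

private lemma not_isPGroup_two_of_order_three {G : Type*} [Group G] (g : G)
    (h3 : g ^ 3 = 1) (h1 : g ≠ 1) : ¬ IsPGroup 2 G := by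
  intro hp
  obtain ⟨k, hk⟩ := IsPGroup.iff_orderOf.mp hp g
  have hd : orderOf g ∣ 3 := orderOf_dvd_of_pow_eq_one h3
  have h3' : orderOf g = 3 := by
    rcases (Nat.prime_three).eq_one_or_self_of_dvd _ hd with h | h
    · exact absurd (orderOf_eq_one_iff.mp h) h1
    · exact h
  rw [h3'] at hk
  rcases k with _ | m
  · simp at hk
  · have : (2 : ℕ) ∣ 3 := hk ▸ dvd_pow_self 2 (Nat.succ_ne_zero m)
    omega

/-- Converse of the lemma on automorphism groups: if a finite metacyclic 2-group `P` is a
nontrivial homocyclic group or a quaternion group of order 8, then `Aut(P)` is not a 2-group. -/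
theorem aut_not_two_group_of_homocyclic_or_Q8 (P : Type*) [Group P] [Finite P]
    (h2 : IsPGroup 2 P) (hmeta : IsMetacyclic P)
    (h : (IsHomocyclic P ∧ Nontrivial P) ∨ Nonempty (P ≃* QuaternionGroup 2)) :
    ¬ IsPGroup 2 (MulAut P) := by
  rcases h with ⟨⟨n, he⟩, hnt⟩ | he <;> obtain ⟨e⟩ := he
  · -- homocyclic case
    haveI : Nontrivial (Multiplicative (ZMod n) × Multiplicative (ZMod n)) :=
      e.symm.surjective.nontrivial
    haveI : Nontrivial (ZMod n) := by
      rcases subsingleton_or_nontrivial (ZMod n) with hs | hs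
      · haveI : Subsingleton (Multiplicative (ZMod n)) := hs
        have hsub : Subsingleton (Multiplicative (ZMod n) × Multiplicative (ZMod n)) :=
          inferInstance
        exact absurd hsub (not_subsingleton _)
      · exact hs
    set g : MulAut P := (MulAut.congr e).symm (triAut n) with hg
    apply not_isPGroup_two_of_order_three g
    · have h3 : ∀ p, triAut n (triAut n (triAut n p)) = p := by
        intro p
        ext
        · simp [triAut]
        · simp [triAut]
      have : (triAut n) ^ 3 = 1 := MulEquiv.ext fun p => by
        simp only [pow_succ, pow_zero, one_mul, MulAut.mul_apply]
        exact h3 p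
      rw [hg, ← map_pow, this, map_one]
    · intro hone
      have := (MulAut.congr e).symm.injective (hone.trans (map_one (MulAut.congr e).symm).symm)
      have h1 : triAut n (Multiplicative.ofAdd (1 : ZMod n), 1) =
          (Multiplicative.ofAdd (1 : ZMod n), 1) := by rw [this]; rfl
      have h2' : (1 : Multiplicative (ZMod n)) = Multiplicative.ofAdd (1 : ZMod n) :=
        congrArg Prod.fst h1
      exact one_ne_zero ((Multiplicative.ofAdd.injective h2'.symm : (1 : ZMod n) = 0))
  · -- Q8 case
    set g : MulAut P := (MulAut.congr e).symm q8Aut with hg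
    apply not_isPGroup_two_of_order_three g
    · have : q8Aut ^ 3 = 1 := MulEquiv.ext fun x => by
        simp only [pow_succ, pow_zero, one_mul, MulAut.mul_apply]
        exact q8f_cube x
      rw [hg, ← map_pow, this, map_one]
    · intro hone
      have := (MulAut.congr e).symm.injective (hone.trans (map_one (MulAut.congr e).symm).symm)
      have h1 : q8Aut (QuaternionGroup.a 1) = QuaternionGroup.a 1 := by rw [this]; rfl
      exact absurd h1 (by decide)
end

section
/- Let P be a finite metacyclic 2-group and let Q be a proper subgroup of P isomorphic to C_{2^k} × C_{2^k} for some k ≥ 2. Then the conjugation action of N_P(Q)/Q on Q/Φ(Q) is not faithful, i.e. some element of N_P(Q) \ Q acts trivially on Q/Φ(Q) by conjugation. -/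
open Subgroup

/-- If `g` has 2-power order (exponent) and `t` is odd, `g` lies in `zpowers (g^t)`. -/
lemma mem_zpowers_zpow_odd {G : Type*} [Group G] {g : G} {n : ℕ} (hg : g ^ (2 ^ n) = 1)
    {t : ℤ} (ht : Odd t) : g ∈ Subgroup.zpowers (g ^ t) := by
  have hcop : IsCoprime t ((2 : ℤ) ^ n) := by
    rw [Int.isCoprime_iff_gcd_eq_one]
    have h2 : Nat.Coprime t.natAbs 2 := by
      exact Nat.coprime_two_right.mpr (Int.natAbs_odd.mpr ht)
    have : Int.gcd t ((2:ℤ) ^ n) = Nat.gcd t.natAbs (2 ^ n) := by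
      simp [Int.gcd, Int.natAbs_pow]
    rw [this]
    exact Nat.Coprime.pow_right n h2
  obtain ⟨a, b, hab⟩ := hcop
  refine ⟨a, ?_⟩
  have h1 : g ^ (1 : ℤ) = g := zpow_one g
  calc (g ^ t) ^ a = g ^ (a * t + b * 2 ^ n) := by
        have h2n : g ^ ((2:ℤ) ^ n) = 1 := by
          have : ((2:ℤ) ^ n) = ((2 ^ n : ℕ) : ℤ) := by push_cast; ring
          rw [this, zpow_natCast, hg]
        rw [zpow_add, mul_comm a t, zpow_mul, mul_comm b, zpow_mul, h2n, one_zpow, mul_one]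
    _ = g := by rw [hab, zpow_one]

/-- A cyclic subgroup has a generator in the ambient group. -/
lemma exists_zpowers_eq {G : Type*} [Group G] (H : Subgroup G) [IsCyclic ↥H] :
    ∃ w ∈ H, Subgroup.zpowers w = H := by
  obtain ⟨w, hw⟩ := IsCyclic.exists_generator (α := ↥H)
  refine ⟨(w : G), w.2, le_antisymm ((Subgroup.zpowers_le).mpr w.2) ?_⟩
  intro h hh
  obtain ⟨m, hm⟩ := hw ⟨h, hh⟩
  have hm' : w ^ m = (⟨h, hh⟩ : ↥H) := hm
  refine ⟨m, ?_⟩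
  show ((w : G)) ^ m = h
  rw [show ((w:G) ^ m) = ((w ^ m : ↥H) : G) from (SubgroupClass.coe_zpow w m).symm, hm']

/-- In a cyclic 2-group, any proper subgroup is `zpowers (x*x)` for some `x` outside it. -/
lemma exists_sq_gen {C : Type*} [Group C] (hC : IsPGroup 2 C) [IsCyclic C]
    {Q : Subgroup C} (hQ : Q ≠ ⊤) : ∃ x : C, x ∉ Q ∧ Subgroup.zpowers (x * x) = Q := by
  by_cases hbot : Q = ⊥
  · subst hbot
    have hz : ∃ z : C, z ≠ 1 := by
      by_contra h
      push_neg at h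
      exact hQ (by ext w; simp [h w])
    obtain ⟨z, hz⟩ := hz
    obtain ⟨n, hn⟩ := hC z
    obtain ⟨j, hj, hoz⟩ := (Nat.dvd_prime_pow Nat.prime_two).mp (orderOf_dvd_of_pow_eq_one hn)
    have hj1 : j ≠ 0 := by
      rintro rfl
      exact hz (orderOf_eq_one_iff.mp (by simpa using hoz))
    refine ⟨z ^ 2 ^ (j - 1), ?_, ?_⟩
    · intro hmem
      have h1 : z ^ 2 ^ (j - 1) = 1 := by simpa using hmem
      have := orderOf_dvd_of_pow_eq_one h1
      rw [hoz] at this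
      have hle := Nat.le_of_dvd (Nat.pow_pos (by norm_num)) this
      have := (Nat.pow_le_pow_iff_right (by norm_num : 1 < 2)).mp hle
      omega
    · have : z ^ 2 ^ (j - 1) * z ^ 2 ^ (j - 1) = 1 := by
        rw [← pow_add]
        have hjj : j - 1 + 1 = j := by omega
        have : 2 ^ (j - 1) + 2 ^ (j - 1) = 2 ^ j := by
          calc 2 ^ (j - 1) + 2 ^ (j - 1) = 2 ^ (j - 1) * 2 := by ring
            _ = 2 ^ (j - 1 + 1) := (pow_succ 2 (j - 1)).symm
            _ = 2 ^ j := by rw [hjj]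
        rw [this, ← hoz, pow_orderOf_eq_one]
      rw [this, Subgroup.zpowers_one_eq_bot]
  · obtain ⟨g, hgen⟩ := IsCyclic.exists_generator (α := C)
    obtain ⟨w, hwQ, hw⟩ := exists_zpowers_eq Q
    have hw1 : w ≠ 1 := by
      rintro rfl
      rw [Subgroup.zpowers_one_eq_bot] at hw
      exact hbot hw.symm
    obtain ⟨t, ht0⟩ := hgen w
    have ht : g ^ t = w := ht0
    have hteven : Even t := by
      by_contra hodd
      obtain ⟨n, hn⟩ := hC g
      have := mem_zpowers_zpow_odd hn (Int.not_even_iff_odd.mp hodd)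
      rw [ht, hw] at this
      refine hQ (top_le_iff.mp fun c _ => ?_)
      obtain ⟨m, hm⟩ := hgen c
      exact hm ▸ Q.zpow_mem this m
    obtain ⟨t', rfl⟩ := hteven
    clear ht0
    refine ⟨g ^ t', ?_, by rw [← zpow_add, ht, hw]⟩
    intro hxQ
    rw [← hw] at hxQ
    obtain ⟨m, hm0⟩ := hxQ
    have hm : w ^ m = g ^ t' := hm0
    have hww : w ^ (2 * m - 1) = 1 := by
      have h2m : w ^ (2 * m) = w := by
        rw [mul_comm, zpow_mul]
        have : (w ^ m) ^ (2:ℤ) = (g ^ t') * (g ^ t') := by rw [hm]; group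
        rw [this, ← zpow_add, ht]
      rw [zpow_sub, h2m, zpow_one, mul_inv_cancel]
    obtain ⟨n, hn⟩ := hC w
    have hodd : Odd (2 * m - 1) := ⟨m - 1, by ring⟩
    have := mem_zpowers_zpow_odd hn hodd
    rw [hww, Subgroup.zpowers_one_eq_bot, Subgroup.mem_bot] at this
    exact hw1 this

/-- In a "commutative" 2-group, squares lie in the Frattini subgroup. -/
lemma sq_mem_frattini {H : Type*} [Group H] (hcomm : ∀ a b : H, a * b = b * a)
    (h2 : IsPGroup 2 H) (g : H) : g * g ∈ frattini H := by
  have : ∀ M : Subgroup H, IsCoatom M → g * g ∈ M := by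
    intro M hM
    by_cases hg : g ∈ M
    · exact M.mul_mem hg hg
    by_contra hgg
    haveI : M.Normal := ⟨fun n hn x => by
      rw [hcomm x n, mul_assoc, mul_inv_cancel, mul_one]; exact hn⟩
    have hmem : g * g ∈ M ⊔ Subgroup.zpowers (g * g) :=
      SetLike.le_def.mp le_sup_right (Subgroup.mem_zpowers _)
    have hlt : M < M ⊔ Subgroup.zpowers (g * g) :=
      lt_of_le_of_ne le_sup_left (fun h => hgg (h ▸ hmem))
    have htop := hM.2 _ hlt
    have hgmem : g ∈ ((M ⊔ Subgroup.zpowers (g * g) : Subgroup H) : Set H) := by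
      rw [htop]; trivial
    rw [Subgroup.normal_mul] at hgmem
    obtain ⟨a, ha, b, hb, hab⟩ := hgmem
    obtain ⟨z, hz0⟩ := hb
    have hz : (g * g) ^ z = b := hz0
    have hb : b = g ^ (2 * z) := by
      rw [← hz, (Commute.refl g).mul_zpow, ← zpow_add, two_mul]
    have hA : a = g ^ (1 - 2 * z) := by
      have ha' : a = g * b⁻¹ := by rw [← hab]; group
      calc a = g ^ (1:ℤ) * g ^ (-(2 * z)) := by rw [ha', hb, zpow_one, zpow_neg]
        _ = g ^ (1 - 2 * z) := by rw [← zpow_add]; ring_nf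
    obtain ⟨n, hn⟩ := h2 g
    have hodd : Odd (1 - 2 * z) := ⟨-z, by ring⟩
    have := mem_zpowers_zpow_odd hn hodd
    rw [← hA] at this
    obtain ⟨m, hm⟩ := this
    exact hg (hm ▸ M.zpow_mem ha m)
  rw [frattini, Order.radical]
  exact Subgroup.mem_iInf.mpr fun M => Subgroup.mem_iInf.mpr fun hM => this M hM

lemma core_metacyclic {G : Type*} [Group G] [Finite G] (hG2 : IsPGroup 2 G)
    (N : Subgroup G) (hN : N.Normal) (hNc : IsCyclic ↥N)
    (hGN : letI := hN; IsCyclic (G ⧸ N))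
    (Q : Subgroup G) (hQtop : Q ≠ ⊤)
    (habQ : ∀ a ∈ Q, ∀ b ∈ Q, a * b = b * a)
    (k : ℕ) (hk : 2 ≤ k)
    (hexp : ∀ q ∈ Q, q ^ (2 ^ k) = 1)
    (hcard : Nat.card Q = 2 ^ (2 * k)) :
    ∃ x : G, x ∉ Q ∧ ∀ q ∈ Q, ∃ r ∈ Q, x * q * x⁻¹ * q⁻¹ = r * r := by
  haveI := hN
  by_cases hNQ : N ≤ Q
  · -- Case A : N ≤ Q
    set Qbar := Q.map (QuotientGroup.mk' N) with hQbar
    have hcomap : Qbar.comap (QuotientGroup.mk' N) = Q := by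
      rw [hQbar, Subgroup.comap_map_eq, QuotientGroup.ker_mk', sup_of_le_left hNQ]
    have hmemiff : ∀ g : G, g ∈ Q ↔ (QuotientGroup.mk' N g) ∈ Qbar := by
      intro g; rw [← hcomap]; rfl
    have hQbartop : Qbar ≠ ⊤ := by
      intro h
      apply hQtop
      rw [← hcomap, h, Subgroup.comap_top]
    obtain ⟨xb, hxbQ, hxbsq⟩ := exists_sq_gen (hG2.to_quotient N) hQbartop
    obtain ⟨x, rfl⟩ := QuotientGroup.mk'_surjective N xb
    refine ⟨x, fun h => hxbQ ((hmemiff x).mp h), ?_⟩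
    obtain ⟨v, hvN, hv⟩ := exists_zpowers_eq N
    have hxvx : x * v * x⁻¹ ∈ Subgroup.zpowers v := hv ▸ hN.conj_mem v hvN x
    obtain ⟨s0, hs0'⟩ := hxvx
    have hs0 : v ^ s0 = x * v * x⁻¹ := hs0'
    -- find an odd natural exponent for the conjugation action on N
    have hsodd : ∃ s' : ℕ, Odd s' ∧ v ^ (s' : ℤ) = x * v * x⁻¹ := by
      by_cases hv1 : v = 1
      · exact ⟨1, odd_one, by rw [hv1]; simp⟩
      · obtain ⟨n, hn⟩ := hG2 v
        obtain ⟨e, _, hoe⟩ := (Nat.dvd_prime_pow Nat.prime_two).mp (orderOf_dvd_of_pow_eq_one hn)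
        have he1 : e ≠ 0 := by
          rintro rfl
          exact hv1 (orderOf_eq_one_iff.mp (by simpa using hoe))
        obtain ⟨f, rfl⟩ : ∃ f, e = f + 1 := ⟨e - 1, by omega⟩
        set s' : ℕ := (s0 % ((2 : ℤ) ^ (f + 1))).toNat with hs'def
        have hnn : (0 : ℤ) ≤ s0 % ((2 : ℤ) ^ (f + 1)) := Int.emod_nonneg _ (by positivity)
        have hmod : v ^ (s' : ℤ) = v ^ s0 := by
          rw [hs'def, Int.toNat_of_nonneg hnn]
          calc v ^ (s0 % ((2:ℤ) ^ (f + 1))) = v ^ (s0 % ((orderOf v : ℤ))) := by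
                rw [hoe]; push_cast; ring_nf
            _ = v ^ s0 := zpow_mod_orderOf v s0
        refine ⟨s', ?_, by rw [hmod, hs0]⟩
        by_contra heven
        rw [Nat.not_odd_iff_even] at heven
        obtain ⟨c, hc⟩ := heven
        have hordconj : orderOf (x * v * x⁻¹) = orderOf v :=
          orderOf_injective (MulAut.conj x).toMonoidHom (MulAut.conj x).injective v
        have hpow : (x * v * x⁻¹) ^ (2 ^ f) = 1 := by
          rw [← hs0, ← hmod]
          have h1 : (v ^ (s' : ℤ)) ^ (2 ^ f) = v ^ ((s' : ℤ) * 2 ^ f) := by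
            rw [← zpow_natCast (v ^ (s' : ℤ)), ← zpow_mul]; push_cast; ring_nf
          rw [h1]
          have h2 : (s' : ℤ) * 2 ^ f = (2 : ℤ) ^ (f + 1) * c := by
            have : (s' : ℤ) = 2 * c := by rw [hc]; push_cast; ring
            rw [this]; ring
          rw [h2, zpow_mul]
          have hv2e : v ^ ((2:ℤ) ^ (f + 1)) = 1 := by
            have : ((2:ℤ) ^ (f + 1)) = ((2 ^ (f + 1) : ℕ) : ℤ) := by push_cast; ring
            rw [this, zpow_natCast, ← hoe, pow_orderOf_eq_one]
          rw [hv2e, one_zpow]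
        have hdvd := orderOf_dvd_of_pow_eq_one hpow
        rw [hordconj, hoe] at hdvd
        have hle := Nat.le_of_dvd (Nat.pow_pos (by norm_num)) hdvd
        have := (Nat.pow_le_pow_iff_right (by norm_num : 1 < 2)).mp hle
        omega
    obtain ⟨s', hs'odd, hs'⟩ := hsodd
    obtain ⟨σ, hσ⟩ := hs'odd
    intro q hq
    set u := x * x with hu
    have huQ : u ∈ Q := by
      rw [hmemiff, map_mul]
      exact hxbsq ▸ Subgroup.mem_zpowers _
    have hqbar : QuotientGroup.mk' N q ∈
        Subgroup.zpowers (QuotientGroup.mk' N x * QuotientGroup.mk' N x) := by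
      rw [hxbsq]
      exact (hmemiff q).mp hq
    obtain ⟨m, hm0⟩ := hqbar
    have hm : (QuotientGroup.mk' N u) ^ m = QuotientGroup.mk' N q := by
      rw [hu, map_mul]; exact hm0
    set ν := (u ^ m)⁻¹ * q with hν
    have hνN : ν ∈ N := by
      have : QuotientGroup.mk' N ν = 1 := by
        rw [hν, map_mul, map_inv, map_zpow, hm]
        group
      rwa [← QuotientGroup.ker_mk' (N := N), MonoidHom.mem_ker]
    have hqdec : u ^ m * ν = q := by rw [hν]; group
    obtain ⟨cν, hcν0⟩ : ν ∈ Subgroup.zpowers v := hv ▸ hνN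
    have hcν : v ^ cν = ν := hcν0
    refine ⟨v ^ ((σ : ℤ) * cν), Subgroup.zpow_mem Q (hNQ hvN) _, ?_⟩
    have hxu : x * u ^ m * x⁻¹ = u ^ m := by
      have hcx : Commute x (u ^ m) :=
        (((Commute.refl x).mul_right (Commute.refl x)).zpow_right m).symm.symm
      rw [hcx.eq, mul_inv_cancel_right]
    have key : x * q * x⁻¹ * q⁻¹ = (x * u ^ m * x⁻¹) * ((x * ν * x⁻¹) * ν⁻¹) * (u ^ m)⁻¹ := by
      rw [← hqdec]; group
    have hmid : (x * ν * x⁻¹) * ν⁻¹ = v ^ (2 * (σ : ℤ) * cν) := by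
      rw [← hcν, ← conj_zpow, ← hs', ← zpow_mul, ← zpow_sub]
      congr 1
      have : (s' : ℤ) = 2 * σ + 1 := by rw [hσ]; push_cast; ring
      rw [this]; ring
    rw [key, hxu, hmid]
    have hcomm2 : u ^ m * v ^ (2 * (σ : ℤ) * cν) * (u ^ m)⁻¹ = v ^ (2 * (σ : ℤ) * cν) := by
      rw [habQ _ (Subgroup.zpow_mem Q huQ m) _ (Subgroup.zpow_mem Q (hNQ hvN) _)]
      exact mul_inv_cancel_right _ _
    rw [hcomm2, ← zpow_add]
    congr 1
    ring
  · -- Case B : ¬ N ≤ Q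
    set φ : ↥Q →* G ⧸ N := (QuotientGroup.mk' N).comp Q.subtype with hφ
    have hker : φ.ker = (N ⊓ Q).subgroupOf Q := by
      ext a
      simp [hφ, MonoidHom.mem_ker, QuotientGroup.eq_one_iff, Subgroup.mem_subgroupOf,
        Subgroup.mem_inf, a.2]
    -- the range is cyclic of exponent dividing 2^k
    obtain ⟨ζ, hζ⟩ := IsCyclic.exists_generator (α := ↥φ.range)
    have hζord : orderOf ζ ∣ 2 ^ k := by
      apply orderOf_dvd_of_pow_eq_one
      obtain ⟨q0, hq0⟩ := ζ.2
      have : ((ζ ^ (2 ^ k) : ↥φ.range) : G ⧸ N) = 1 := by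
        rw [SubgroupClass.coe_pow, ← hq0, ← map_pow]
        have : q0 ^ (2 ^ k) = 1 := by
          ext
          rw [SubmonoidClass.coe_pow]
          exact hexp _ q0.2
        rw [this, map_one]
      exact Subtype.ext (by simpa using this)
    have hrange_card : Nat.card ↥φ.range ∣ 2 ^ k := by
      rw [← orderOf_eq_card_of_forall_mem_zpowers hζ]
      exact hζord
    have hDcard : 2 ^ k ≤ Nat.card ↥(N ⊓ Q) := by
      have h1 : Nat.card ↥Q = Nat.card (↥Q ⧸ φ.ker) * Nat.card ↥φ.ker :=
        Subgroup.card_eq_card_quotient_mul_card_subgroup φ.ker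
      have h2 : Nat.card (↥Q ⧸ φ.ker) = Nat.card ↥φ.range :=
        Nat.card_congr (QuotientGroup.quotientKerEquivRange φ).toEquiv
      have h3 : Nat.card ↥φ.ker = Nat.card ↥(N ⊓ Q) := by
        rw [hker]
        exact Nat.card_congr (Subgroup.subgroupOfEquivOfLe inf_le_right).toEquiv
      have hle : Nat.card ↥φ.range ≤ 2 ^ k :=
        Nat.le_of_dvd (Nat.pow_pos (by norm_num)) hrange_card
      have : 2 ^ k * 2 ^ k ≤ 2 ^ k * Nat.card ↥(N ⊓ Q) := by
        calc 2 ^ k * 2 ^ k = 2 ^ (2 * k) := by rw [← pow_add]; ring_nf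
          _ = Nat.card ↥Q := hcard.symm
          _ = Nat.card ↥φ.range * Nat.card ↥(N ⊓ Q) := by rw [h1, h2, h3]
          _ ≤ 2 ^ k * Nat.card ↥(N ⊓ Q) := Nat.mul_le_mul_right _ hle
      exact Nat.le_of_mul_le_mul_left this (Nat.pow_pos (by norm_num))
    -- pick y ∈ N \ Q with y² generating N ⊓ Q
    have hD'top : (N ⊓ Q).subgroupOf N ≠ ⊤ := by
      intro h
      exact hNQ (le_trans (Subgroup.subgroupOf_eq_top.mp h) inf_le_right)
    obtain ⟨yb, hybD, hybsq⟩ := exists_sq_gen (hG2.to_subgroup N) hD'top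
    set y := (yb : G) with hy
    have hyN : y ∈ N := yb.2
    have hyQ : y ∉ Q := by
      intro h
      exact hybD (Subgroup.mem_subgroupOf.mpr ⟨yb.2, h⟩)
    have hy2D : y * y ∈ N ⊓ Q := by
      have h' : yb * yb ∈ (N ⊓ Q).subgroupOf N := hybsq ▸ Subgroup.mem_zpowers _
      have h'' := Subgroup.mem_subgroupOf.mp h'
      simpa using h''
    have hy2Q : y * y ∈ Q := hy2D.2
    -- order of y
    have hordy2 : 2 ^ k ≤ orderOf (y * y) := by
      have h1 : orderOf (yb * yb) = Nat.card ↥((N ⊓ Q).subgroupOf N) := by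
        rw [← hybsq, Nat.card_zpowers]
      have h2 : Nat.card ↥((N ⊓ Q).subgroupOf N) = Nat.card ↥(N ⊓ Q) :=
        Nat.card_congr (Subgroup.subgroupOfEquivOfLe inf_le_left).toEquiv
      have h3 : orderOf (y * y) = orderOf (yb * yb) := by
        rw [hy, ← Subgroup.coe_mul]
        exact Subgroup.orderOf_coe _
      omega
    obtain ⟨n, hn⟩ := hG2 y
    obtain ⟨m, _, hom⟩ := (Nat.dvd_prime_pow Nat.prime_two).mp (orderOf_dvd_of_pow_eq_one hn)
    have hm0 : m ≠ 0 := by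
      rintro rfl
      exact hyQ ((orderOf_eq_one_iff.mp (by simpa using hom)) ▸ Q.one_mem)
    obtain ⟨d0, rfl⟩ : ∃ d0, m = d0 + 1 := ⟨m - 1, by omega⟩
    have hd0 : 2 ≤ d0 := by
      have h2 : orderOf (y * y) = 2 ^ d0 := by
        have hyy : y * y = y ^ 2 := (pow_two y).symm
        rw [hyy, orderOf_pow' y (by norm_num : (2:ℕ) ≠ 0), hom]
        have hgcd : Nat.gcd (2 ^ (d0 + 1)) 2 = 2 := by
          rw [Nat.gcd_comm]
          exact Nat.gcd_eq_left ⟨2 ^ d0, by ring⟩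
        rw [hgcd, pow_succ, Nat.mul_div_cancel _ (by norm_num)]
      rw [h2] at hordy2
      have := (Nat.pow_le_pow_iff_right (by norm_num : 1 < 2)).mp hordy2
      omega
    obtain ⟨d, rfl⟩ : ∃ d, d0 = d + 2 := ⟨d0 - 2, by omega⟩
    -- conjugation by q ∈ Q
    refine ⟨y, hyQ, ?_⟩
    intro q hq
    obtain ⟨c, hcN, hc⟩ := exists_zpowers_eq N
    obtain ⟨j, hj0⟩ : y ∈ Subgroup.zpowers c := hc ▸ hyN
    have hj : c ^ j = y := hj0
    have hqc : q * c * q⁻¹ ∈ Subgroup.zpowers c := hc ▸ hN.conj_mem c hcN q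
    obtain ⟨t, ht0⟩ := hqc
    have ht : c ^ t = q * c * q⁻¹ := ht0
    have hqy : q * y * q⁻¹ = y ^ t := by
      calc q * y * q⁻¹ = (q * c * q⁻¹) ^ j := by rw [conj_zpow, hj]
        _ = (c ^ t) ^ j := by rw [ht]
        _ = (c ^ j) ^ t := by rw [← zpow_mul, mul_comm, zpow_mul]
        _ = y ^ t := by rw [hj]
    have hy2c : y ^ (2 * t - 2) = 1 := by
      have hcomm : q * (y * y) * q⁻¹ = y * y := by
        rw [habQ q hq _ hy2Q]; group
      have hconj : q * (y * y) * q⁻¹ = y ^ (2 * t) := by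
        calc q * (y * y) * q⁻¹ = (q * y * q⁻¹) * (q * y * q⁻¹) := by group
          _ = y ^ t * y ^ t := by rw [hqy]
          _ = y ^ (2 * t) := by rw [← zpow_add]; ring_nf
      have hyy2 : y ^ (2 * t) = y ^ (2 : ℤ) := by
        rw [← hconj, hcomm, zpow_two]
      rw [zpow_sub, hyy2]
      group
    have hdvd : ((2 : ℤ) ^ (d + 3)) ∣ 2 * t - 2 := by
      have := orderOf_dvd_iff_zpow_eq_one.mpr hy2c
      rw [hom] at this
      have hcast : ((2 ^ (d + 3) : ℕ) : ℤ) = (2 : ℤ) ^ (d + 3) := by push_cast; ring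
      rwa [hcast] at this
    obtain ⟨z, hz⟩ := hdvd
    have htz : t - 1 = 2 ^ (d + 2) * z := by
      have h2 : 2 * (t - 1) = 2 * ((2:ℤ) ^ (d + 2) * z) := by
        have hm1 : ((2 : ℤ) ^ (d + 3)) = 2 * 2 ^ (d + 2) := by ring
        rw [← mul_assoc, ← hm1, ← hz]; ring
      exact mul_left_cancel₀ (by norm_num) h2
    have hcommut : y * q * y⁻¹ * q⁻¹ = y ^ (1 - t) := by
      have h1 : y * q * y⁻¹ * q⁻¹ = y * (q * y⁻¹ * q⁻¹) := by group
      have h2 : q * y⁻¹ * q⁻¹ = y ^ (-t) := by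
        have : q * y⁻¹ * q⁻¹ = (q * y * q⁻¹)⁻¹ := by group
        rw [this, hqy]
        group
      rw [h1, h2, show (1:ℤ) - t = 1 + -t by ring, zpow_add, zpow_one]
    refine ⟨y ^ ((2 : ℤ) ^ (d + 1) * (-z)), ?_, ?_⟩
    · have hsplit : (2 : ℤ) ^ (d + 1) * (-z) = 2 * ((2 : ℤ) ^ d * (-z)) := by ring
      rw [hsplit, zpow_mul, zpow_two]
      exact Subgroup.zpow_mem Q hy2Q _
    · rw [hcommut, ← zpow_add]
      congr 1
      have h1m : 1 - t = 2 ^ (d + 2) * (-z) := by rw [← neg_sub t 1, htz]; ring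
      rw [h1m]
      ring


/-- Let `P` be a finite metacyclic 2-group and `Q < P` a proper subgroup isomorphic to
`C_{2^k} × C_{2^k}` with `k ≥ 2`.  Then the conjugation action of `N_P(Q)/Q` on `Q/Φ(Q)` is
not faithful: some element of `N_P(Q) \ Q` acts trivially on `Q/Φ(Q)`. -/
theorem not_faithful_on_frattini_quotient (P : Type*) [Group P] [Finite P]
    (h2 : IsPGroup 2 P) (hmeta : IsMetacyclic P)
    (Q : Subgroup P) (hQlt : Q ≠ ⊤) (k : ℕ) (hk : 2 ≤ k)
    (hQ : Nonempty (↥Q ≃* (Multiplicative (ZMod (2 ^ k)) × Multiplicative (ZMod (2 ^ k))))) :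
    ∃ x ∈ Subgroup.normalizer (Q : Set P), x ∉ Q ∧
      ∀ q ∈ Q, x * q * x⁻¹ * q⁻¹ ∈ (frattini ↥Q).map Q.subtype := by
  obtain ⟨e⟩ := hQ
  obtain ⟨N, hN, hNcyc, hPN⟩ := hmeta
  haveI := hN
  haveI := hNcyc
  haveI : Fact (Nat.Prime 2) := ⟨Nat.prime_two⟩
  -- commutativity of Q
  have habQ : ∀ a ∈ Q, ∀ b ∈ Q, a * b = b * a := by
    intro a ha b hb
    have h : (⟨a, ha⟩ : ↥Q) * ⟨b, hb⟩ = ⟨b, hb⟩ * ⟨a, ha⟩ := by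
      apply e.injective
      rw [map_mul, map_mul, mul_comm]
    simpa using Subtype.ext_iff.mp h
  -- exponent of Q
  have hexpA : ∀ a : (Multiplicative (ZMod (2 ^ k)) × Multiplicative (ZMod (2 ^ k))),
      a ^ (2 ^ k) = 1 := by
    have hbase : ∀ b : Multiplicative (ZMod (2 ^ k)), b ^ (2 ^ k) = 1 := by
      intro b
      have h0 : (2 ^ k) • (Multiplicative.toAdd b) = 0 := by
        have hz : ((2 ^ k : ℕ) : ZMod (2 ^ k)) = 0 := ZMod.natCast_self _
        rw [nsmul_eq_mul, hz, zero_mul]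
      apply Multiplicative.toAdd.injective
      simpa [toAdd_pow] using h0
    intro a
    exact Prod.ext (by simpa using hbase a.1) (by simpa using hbase a.2)
  have hexpQ : ∀ q ∈ Q, q ^ (2 ^ k) = 1 := by
    intro q hq
    have h1 : (⟨q, hq⟩ : ↥Q) ^ (2 ^ k) = 1 := by
      apply e.injective
      rw [map_pow, map_one, hexpA]
    simpa using Subtype.ext_iff.mp h1
  -- cardinality of Q
  have hcardQ : Nat.card ↥Q = 2 ^ (2 * k) := by
    have h1 : Nat.card ↥Q
        = Nat.card (Multiplicative (ZMod (2 ^ k)) × Multiplicative (ZMod (2 ^ k))) :=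
      Nat.card_congr e.toEquiv
    have h2 : Nat.card (Multiplicative (ZMod (2 ^ k))) = 2 ^ k := by
      rw [Nat.card_congr Multiplicative.toAdd, Nat.card_zmod]
    rw [h1, Nat.card_prod, h2, ← pow_add, two_mul]
  -- normalizer strictly contains Q
  haveI hnil : Group.IsNilpotent P := h2.isNilpotent
  have hQltR : Q < Subgroup.normalizer (Q : Set P) :=
    normalizerCondition_of_isNilpotent Q (lt_top_iff_ne_top.mpr hQlt)
  set R := Subgroup.normalizer (Q : Set P) with hR
  have hR2 : IsPGroup 2 ↥R := h2.to_subgroup R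
  -- the cyclic normal subgroup of R
  set N' := N.subgroupOf R with hN'
  haveI hN'norm : N'.Normal := hN.subgroupOf R
  have hN'cyc : IsCyclic ↥N' := by
    rw [hN', ← Subgroup.inf_subgroupOf_right]
    haveI : IsCyclic ↥((N ⊓ R).subgroupOf N) := Subgroup.isCyclic _
    have F : ↥((N ⊓ R).subgroupOf N) ≃* ↥((N ⊓ R).subgroupOf R) :=
      (Subgroup.subgroupOfEquivOfLe inf_le_left).trans
        (Subgroup.subgroupOfEquivOfLe inf_le_right).symm
    exact isCyclic_of_surjective F.toMonoidHom F.surjective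
  have hquotcyc : IsCyclic (↥R ⧸ N') := by
    set ψ : ↥R →* P ⧸ N := (QuotientGroup.mk' N).comp R.subtype with hψ
    have hkerψ : ψ.ker = N' := by
      ext a
      simp [hψ, MonoidHom.mem_ker, QuotientGroup.eq_one_iff, Subgroup.mem_subgroupOf, hN']
    haveI : IsCyclic ↥ψ.range := Subgroup.isCyclic _
    have F := (QuotientGroup.quotientMulEquivOfEq hkerψ.symm).trans
      (QuotientGroup.quotientKerEquivRange ψ)
    exact isCyclic_of_surjective F.symm.toMonoidHom F.symm.surjective
  -- Q inside R
  set Q' := Q.subgroupOf R with hQ'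
  have hQ'top : Q' ≠ ⊤ := by
    intro h
    exact hQltR.not_ge (Subgroup.subgroupOf_eq_top.mp h)
  have habQ' : ∀ a ∈ Q', ∀ b ∈ Q', a * b = b * a := by
    intro a ha b hb
    exact Subtype.ext (habQ _ (Subgroup.mem_subgroupOf.mp ha) _ (Subgroup.mem_subgroupOf.mp hb))
  have hexpQ' : ∀ q ∈ Q', q ^ (2 ^ k) = 1 := by
    intro q hq
    exact Subtype.ext (by simpa using hexpQ _ (Subgroup.mem_subgroupOf.mp hq))
  have hcardQ' : Nat.card ↥Q' = 2 ^ (2 * k) := by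
    rw [← hcardQ]
    exact Nat.card_congr (Subgroup.subgroupOfEquivOfLe Subgroup.le_normalizer).toEquiv
  obtain ⟨x, hxQ', hxcomm⟩ :=
    core_metacyclic hR2 N' hN'norm hN'cyc hquotcyc Q' hQ'top habQ' k hk hexpQ' hcardQ'
  refine ⟨(x : P), x.2, fun h => hxQ' (Subgroup.mem_subgroupOf.mpr h), ?_⟩
  intro q hq
  have hqR : q ∈ R := Subgroup.le_normalizer hq
  obtain ⟨r, hrQ', hr⟩ := hxcomm ⟨q, hqR⟩ (Subgroup.mem_subgroupOf.mpr hq)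
  have hrQ : (r : P) ∈ Q := Subgroup.mem_subgroupOf.mp hrQ'
  have hcoe : (x : P) * q * (x : P)⁻¹ * q⁻¹ = (r : P) * (r : P) := by
    simpa using Subtype.ext_iff.mp hr
  rw [hcoe]
  have hcQ : ∀ a b : ↥Q, a * b = b * a := fun a b => Subtype.ext (habQ _ a.2 _ b.2)
  have hfr := sq_mem_frattini hcQ (h2.to_subgroup Q) (⟨(r : P), hrQ⟩ : ↥Q)
  exact Subgroup.mem_map.mpr ⟨_, hfr, rfl⟩
end

section
/- Let P be a finite metacyclic 2-group and let k ≥ 2. If Q₁ and Q₂ are subgroups of P both isomorphic to C_{2^k} × C_{2^k}, then Q₁ = Q₂. In particular, any subgroup Q of P isomorphic to C_{2^k} × C_{2^k} is normal in P, i.e. N_P(Q) = P. -/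
open scoped Pointwise

/-! ### Auxiliary lemmas -/

/-- The 2-adic valuation of the geometric sum `1 + b + ⋯ + b^(2^k - 1)` is exactly `k`
when `b ≡ 1 (mod 4)`. -/
lemma aux_geom_sum (b : ℤ) (hb : (4:ℤ) ∣ b - 1) (k : ℕ) :
    ∃ v : ℤ, Odd v ∧ (∑ i ∈ Finset.range (2^k), b ^ i) = 2^k * v := by
  induction k with
  | zero => exact ⟨1, odd_one, by simp⟩
  | succ k ih =>
    obtain ⟨v, hv, hs⟩ := ih
    have h4 : (4:ℤ) ∣ b ^ (2^k) - 1 := by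
      have h1 : b ≡ 1 [ZMOD 4] := Int.modEq_iff_dvd.mpr (by omega)
      have h2 := (h1.pow (2^k)).dvd
      simp only [one_pow] at h2
      omega
    obtain ⟨w, hw⟩ := h4
    have hsplit : (∑ i ∈ Finset.range (2^(k+1)), b ^ i)
        = (∑ i ∈ Finset.range (2^k), b ^ i) * (1 + b ^ (2^k)) := by
      have h2 : 2^(k+1) = 2^k + 2^k := by ring
      rw [h2, Finset.sum_range_add]
      simp only [pow_add, ← Finset.mul_sum]
      ring
    refine ⟨v * (1 + 2*w), hv.mul ⟨w, by ring⟩, ?_⟩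
    rw [hsplit, hs]
    have h3 : 1 + b ^ (2^k) = 2 * (1 + 2*w) := by linarith
    rw [h3, pow_succ]
    ring

/-- In a finite cyclic group, a subgroup of order `T` consists exactly of the solutions
of `x ^ T = 1`. -/
lemma aux_mem_iff_pow {G : Type*} [Group G] [Finite G] [IsCyclic G]
    (H : Subgroup G) {T : ℕ} (hT : 0 < T) (hcard : Nat.card ↥H = T) (x : G) :
    x ∈ H ↔ x ^ T = 1 := by
  classical
  letI : Fintype G := Fintype.ofFinite G
  have fwd : ∀ a : G, a ∈ H → a ^ T = 1 := by
    intro a ha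
    have h1 : (⟨a, ha⟩ : H) ^ T = 1 := by rw [← hcard]; exact pow_card_eq_one'
    simpa using congrArg Subtype.val h1
  constructor
  · exact fwd x
  · intro hx
    set S : Finset G := Finset.univ.filter (fun a => a ^ T = 1) with hS
    set HF : Finset G := Finset.univ.filter (fun a => a ∈ H) with hHF
    have hcardS : S.card ≤ T := IsCyclic.card_pow_eq_one_le hT
    have hsub : HF ⊆ S := by
      intro a ha
      rw [hHF, Finset.mem_filter] at ha
      rw [hS, Finset.mem_filter]
      exact ⟨Finset.mem_univ _, fwd a ha.2⟩
    have hHFcard : HF.card = T := by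
      rw [hHF, ← Fintype.card_subtype, ← Nat.card_eq_fintype_card]
      exact hcard
    have heq : HF = S := Finset.eq_of_subset_of_card_le hsub (by omega)
    have hxS : x ∈ S := by rw [hS, Finset.mem_filter]; exact ⟨Finset.mem_univ _, hx⟩
    rw [← heq, hHF, Finset.mem_filter] at hxS
    exact hxS.2

/-- Every element of a subgroup isomorphic to `C_m × C_m` satisfies `x ^ m = 1`. -/
lemma aux_iso_pow {P : Type*} [Group P] {m : ℕ} {Q : Subgroup P}
    (e : ↥Q ≃* (Multiplicative (ZMod m) × Multiplicative (ZMod m))) (x : ↥Q) : x ^ m = 1 := by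
  have key : ∀ y : Multiplicative (ZMod m) × Multiplicative (ZMod m), y ^ m = 1 := by
    intro y
    have h1 : ∀ z : Multiplicative (ZMod m), z ^ m = 1 := by
      intro z
      have : Multiplicative.toAdd (z ^ m) = Multiplicative.toAdd (1 : Multiplicative (ZMod m)) := by
        rw [toAdd_pow]
        simp [nsmul_eq_mul, ZMod.natCast_self]
      exact Multiplicative.toAdd.injective this
    have : y ^ m = (y.1 ^ m, y.2 ^ m) := rfl
    rw [this, h1, h1]
    rfl
  apply e.injective
  rw [map_pow, map_one]
  exact key _

lemma aux_iso_card {P : Type*} [Group P] {m : ℕ} {Q : Subgroup P}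
    (e : ↥Q ≃* (Multiplicative (ZMod m) × Multiplicative (ZMod m))) :
    Nat.card ↥Q = m * m := by
  rw [Nat.card_congr e.toEquiv, Nat.card_prod, Nat.card_congr Multiplicative.toAdd,
    Nat.card_zmod]

lemma aux_iso_comm {P : Type*} [Group P] {m : ℕ} {Q : Subgroup P}
    (e : ↥Q ≃* (Multiplicative (ZMod m) × Multiplicative (ZMod m))) (a b : ↥Q) :
    a * b = b * a :=
  e.injective (by rw [map_mul, map_mul, mul_comm])

/-- A finite cyclic group of exponent dividing `m` has at most `m` elements. -/
lemma aux_card_le {G : Type*} [Group G] [Finite G] [IsCyclic G] {m : ℕ} (hm : 0 < m)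
    (h : ∀ x : G, x ^ m = 1) : Nat.card G ≤ m := by
  obtain ⟨g, hg⟩ := IsCyclic.exists_generator (α := G)
  have h1 : orderOf g = Nat.card G := orderOf_eq_card_of_forall_mem_zpowers hg
  have h2 : orderOf g ∣ m := orderOf_dvd_of_pow_eq_one (h g)
  rw [← h1]
  exact Nat.le_of_dvd hm h2

/-- In the metacyclic situation, `Q ⊓ N` and the image of `Q` in `P ⧸ N` both have
order `2 ^ k`. -/
lemma aux_cards {P : Type*} [Group P] [Finite P] {k : ℕ}
    (N : Subgroup P) [hN : N.Normal] [IsCyclic ↥N] [IsCyclic (P ⧸ N)]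
    (Q : Subgroup P)
    (e : ↥Q ≃* (Multiplicative (ZMod (2^k)) × Multiplicative (ZMod (2^k)))) :
    Nat.card ↥(Q ⊓ N) = 2^k ∧ Nat.card ↥(Subgroup.map (QuotientGroup.mk' N) Q) = 2^k := by
  have hm : 0 < 2^k := Nat.two_pow_pos k
  have hcardQ : Nat.card ↥Q = 2^k * 2^k := aux_iso_card e
  set f := QuotientGroup.mk' N with hf
  set g : ↥Q →* P ⧸ N := f.comp Q.subtype with hg
  have hker : g.ker = (Q ⊓ N).subgroupOf Q := by
    rw [hg, ← MonoidHom.comap_ker, hf, QuotientGroup.ker_mk', inf_comm,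
      Subgroup.inf_subgroupOf_right]
    rfl
  have hlag : Nat.card ↥Q = Nat.card (↥Q ⧸ g.ker) * Nat.card g.ker :=
    Subgroup.card_eq_card_quotient_mul_card_subgroup g.ker
  have hrange : g.range = Subgroup.map f Q := by
    rw [hg, MonoidHom.range_comp, Subgroup.range_subtype]
  have hquot : Nat.card (↥Q ⧸ g.ker) = Nat.card ↥(Subgroup.map f Q) := by
    rw [Nat.card_congr (QuotientGroup.quotientKerEquivRange g).toEquiv, hrange]
  have hkercard : Nat.card g.ker = Nat.card ↥(Q ⊓ N) := by
    rw [hker]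
    exact Nat.card_congr (Subgroup.subgroupOfEquivOfLe inf_le_left).toEquiv
  -- cyclicity
  haveI hDcyc : IsCyclic ↥(Q ⊓ N) := by
    haveI := Subgroup.isCyclic ((Q ⊓ N).subgroupOf N)
    exact isCyclic_of_surjective (Subgroup.subgroupOfEquivOfLe inf_le_right).toMonoidHom
      (Subgroup.subgroupOfEquivOfLe inf_le_right).surjective
  haveI hRcyc : IsCyclic ↥(Subgroup.map f Q) := Subgroup.isCyclic _
  -- exponent bounds
  have hDle : Nat.card ↥(Q ⊓ N) ≤ 2^k := by
    apply aux_card_le hm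
    intro x
    have hxQ : (↑x : P) ∈ Q := x.2.1
    have h1 := aux_iso_pow e ⟨↑x, hxQ⟩
    have h2 : (↑x : P) ^ (2^k) = 1 := by simpa using congrArg Subtype.val h1
    exact Subtype.ext (by push_cast; exact h2)
  have hRle : Nat.card ↥(Subgroup.map f Q) ≤ 2^k := by
    apply aux_card_le hm
    intro y
    obtain ⟨q, hq, hfq⟩ := y.2
    have h1 := aux_iso_pow e ⟨q, hq⟩
    have h2 : q ^ (2^k) = 1 := by simpa using congrArg Subtype.val h1
    have h3 : (↑y : P ⧸ N) ^ (2^k) = 1 := by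
      rw [← hfq, ← map_pow, h2, map_one]
    exact Subtype.ext (by push_cast; exact h3)
  -- positivity and arithmetic
  have hDpos : 0 < Nat.card ↥(Q ⊓ N) := Nat.card_pos
  have hRpos : 0 < Nat.card ↥(Subgroup.map f Q) := Nat.card_pos
  have heq : Nat.card ↥(Subgroup.map f Q) * Nat.card ↥(Q ⊓ N) = 2^k * 2^k := by
    rw [← hquot, ← hkercard, ← hlag, hcardQ]
  constructor <;> nlinarith

/-- Main inclusion: any two subgroups of a finite metacyclic 2-group isomorphic to
`C_{2^k} × C_{2^k}` (with `k ≥ 2`) satisfy `Q₂ ≤ Q₁`. -/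
lemma homo_le (P : Type*) [Group P] [Finite P]
    (h2 : IsPGroup 2 P) (hmeta : IsMetacyclic P) (k : ℕ) (hk : 2 ≤ k)
    (Q₁ Q₂ : Subgroup P)
    (hQ₁ : Nonempty (↥Q₁ ≃* (Multiplicative (ZMod (2 ^ k)) × Multiplicative (ZMod (2 ^ k)))))
    (hQ₂ : Nonempty (↥Q₂ ≃* (Multiplicative (ZMod (2 ^ k)) × Multiplicative (ZMod (2 ^ k))))) :
    Q₂ ≤ Q₁ := by
  obtain ⟨e₁⟩ := hQ₁
  obtain ⟨e₂⟩ := hQ₂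
  obtain ⟨N, hN, hNcyc, hQcyc⟩ := hmeta
  letI := hN
  haveI := hNcyc
  haveI : IsCyclic (P ⧸ N) := hQcyc
  haveI : Fact (Nat.Prime 2) := ⟨Nat.prime_two⟩
  have hm : 0 < 2^k := Nat.two_pow_pos k
  obtain ⟨hD1, hR1⟩ := aux_cards N Q₁ e₁
  obtain ⟨hD2, hR2⟩ := aux_cards N Q₂ e₂
  -- the images in the cyclic quotient coincide
  have hReq : Subgroup.map (QuotientGroup.mk' N) Q₁ = Subgroup.map (QuotientGroup.mk' N) Q₂ := by
    ext y
    rw [aux_mem_iff_pow _ hm hR1 y, aux_mem_iff_pow _ hm hR2 y]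
  have hle : Q₂ ≤ Q₁ ⊔ N := by
    calc Q₂ ≤ Subgroup.comap (QuotientGroup.mk' N) (Subgroup.map (QuotientGroup.mk' N) Q₂) :=
          Subgroup.le_comap_map _ _
      _ = Q₁ ⊔ N := by rw [← hReq, Subgroup.comap_map_eq, QuotientGroup.ker_mk']
  intro x hx
  have hx1 : x ∈ ((Q₁ : Set P) * (N : Set P)) := by
    rw [← Subgroup.mul_normal]
    exact hle hx
  obtain ⟨q, hq, n0, hn0, rfl⟩ := hx1
  -- conjugation by q induces an automorphism of N
  set φ : ↥N →* ↥N :=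
    { toFun := fun y => ⟨q⁻¹ * ↑y * q, by simpa using hN.conj_mem ↑y y.2 q⁻¹⟩
      map_one' := by ext; simp
      map_mul' := fun a b => by ext; simp [mul_assoc] } with hφ
  obtain ⟨b, hb⟩ := MonoidHom.map_cyclic φ
  have hconj : ∀ y : ↥N, q⁻¹ * ↑y * q = ((y ^ b : ↥N) : P) := by
    intro y
    exact congrArg Subtype.val (hb y)
  -- 4 divides b - 1
  haveI hDcyc : IsCyclic ↥(Q₁ ⊓ N) := by
    haveI := Subgroup.isCyclic ((Q₁ ⊓ N).subgroupOf N)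
    exact isCyclic_of_surjective (Subgroup.subgroupOfEquivOfLe inf_le_right).toMonoidHom
      (Subgroup.subgroupOfEquivOfLe inf_le_right).surjective
  obtain ⟨c, hc⟩ := IsCyclic.exists_generator (α := ↥(Q₁ ⊓ N))
  have hcordP : orderOf (↑c : P) = 2^k := by
    have h1 := orderOf_injective (Q₁ ⊓ N).subtype (Subgroup.subtype_injective _) c
    have h2 := (orderOf_eq_card_of_forall_mem_zpowers hc).trans hD1
    rw [← h2]
    exact h1
  set c' : ↥N := ⟨↑c, c.2.2⟩ with hc'
  have hcord' : orderOf c' = 2^k := by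
    have h1 := orderOf_injective N.subtype (Subgroup.subtype_injective _) c'
    rw [← h1]
    exact hcordP
  have hfix : φ c' = c' := by
    have hcomm := aux_iso_comm e₁ (⟨q, hq⟩ : ↥Q₁) ⟨↑c, c.2.1⟩
    have hcomm' : q * ↑c = ↑c * q := by simpa using congrArg Subtype.val hcomm
    apply Subtype.ext
    show q⁻¹ * (c' : P) * q = (c' : P)
    have hc'c : (c' : P) = (↑c : P) := rfl
    rw [hc'c, mul_assoc, ← hcomm']
    group
  have hdvd4 : (4:ℤ) ∣ b - 1 := by
    have h1 : c' ^ (b - 1) = 1 := by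
      have h0 := hb c'
      rw [hfix] at h0
      rw [zpow_sub, ← h0, zpow_one, mul_inv_cancel]
    have h2 : ((2^k : ℕ) : ℤ) ∣ b - 1 := by
      rw [← hcord']
      exact orderOf_dvd_iff_zpow_eq_one.mpr h1
    have h3 : (4:ℤ) ∣ ((2^k : ℕ) : ℤ) := by
      have : (2^2 : ℕ) ∣ 2^k := pow_dvd_pow 2 hk
      exact_mod_cast Int.natCast_dvd_natCast.mpr this
    exact h3.trans h2
  -- the power formula
  set n : ↥N := ⟨n0, hn0⟩ with hn
  have hform : ∀ t : ℕ, (q * n0) ^ t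
      = q ^ t * ((n ^ (∑ i ∈ Finset.range t, b ^ i) : ↥N) : P) := by
    intro t
    induction t with
    | zero => simp
    | succ t ih =>
      set σt : ℤ := ∑ i ∈ Finset.range t, b ^ i with hσt
      have hmove : ((n ^ σt : ↥N) : P) * q = q * (((n ^ σt) ^ b : ↥N) : P) := by
        have h := hconj (n ^ σt)
        rw [← h]
        group
      have hgs : (∑ i ∈ Finset.range (t+1), b ^ i) = b * σt + 1 := geom_sum_succ
      calc (q * n0) ^ (t+1) = (q ^ t * ((n ^ σt : ↥N) : P)) * (q * n0) := by
            rw [pow_succ, ih]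
        _ = q ^ t * ((((n ^ σt : ↥N) : P) * q) * n0) := by
            simp [mul_assoc]
        _ = q ^ t * ((q * (((n ^ σt) ^ b : ↥N) : P)) * n0) := by rw [hmove]
        _ = q ^ (t+1) * ((((n ^ σt) ^ b : ↥N) : P) * ((n : ↥N) : P)) := by
            rw [pow_succ]
            simp [mul_assoc, hn]
        _ = q ^ (t+1) * (((n ^ σt) ^ b * n : ↥N) : P) := by push_cast; ring_nf
        _ = q ^ (t+1) * ((n ^ (∑ i ∈ Finset.range (t+1), b ^ i) : ↥N) : P) := by
            rw [hgs, ← zpow_mul, mul_comm σt b, ← zpow_add_one]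
  -- evaluate at 2^k
  have hx2 : (q * n0) ^ (2^k) = 1 := by
    have h1 := aux_iso_pow e₂ ⟨q * n0, hx⟩
    simpa using congrArg Subtype.val h1
  have hq2 : q ^ (2^k) = 1 := by
    have h1 := aux_iso_pow e₁ ⟨q, hq⟩
    simpa using congrArg Subtype.val h1
  have hnσ : (n : ↥N) ^ (∑ i ∈ Finset.range (2^k), b ^ i) = 1 := by
    have h1 := hform (2^k)
    rw [hx2, hq2, one_mul] at h1
    exact Subtype.ext h1.symm
  obtain ⟨v, hv, hσ⟩ := aux_geom_sum b hdvd4 k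
  -- n has order dividing 2^k
  have hw : (n ^ (2^k : ℕ) : ↥N) = 1 := by
    set w : ↥N := n ^ (2^k : ℕ) with hwdef
    have h1 : w ^ v = 1 := by
      rw [hwdef, ← zpow_natCast n (2^k), ← zpow_mul]
      rw [hσ] at hnσ
      exact_mod_cast hnσ
    have h1' : w ^ (v.natAbs) = 1 := by
      rcases Int.natAbs_eq v with h | h
      · rw [h] at h1
        exact_mod_cast (zpow_natCast w v.natAbs) ▸ h1
      · rw [h, zpow_neg] at h1
        have := inv_eq_one.mp h1
        exact_mod_cast (zpow_natCast w v.natAbs) ▸ this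
    obtain ⟨j, hj⟩ := (IsPGroup.iff_orderOf.mp (h2.to_subgroup N)) w
    have hdvd : orderOf w ∣ v.natAbs := orderOf_dvd_of_pow_eq_one h1'
    have hvodd : Odd v.natAbs := Int.natAbs_odd.mpr hv
    have hj0 : j = 0 := by
      by_contra hne
      have h2d : 2 ∣ v.natAbs := (dvd_pow_self 2 hne).trans (hj ▸ hdvd)
      rw [Nat.odd_iff] at hvodd
      omega
    rw [hj0, pow_zero] at hj
    exact orderOf_eq_one_iff.mp hj
  -- conclude n0 ∈ Q₁
  have hcardsub : Nat.card ↥((Q₁ ⊓ N).subgroupOf N) = 2^k := by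
    rw [Nat.card_congr (Subgroup.subgroupOfEquivOfLe (inf_le_right : Q₁ ⊓ N ≤ N)).toEquiv]
    exact hD1
  have hnmem : (n : ↥N) ∈ (Q₁ ⊓ N).subgroupOf N := by
    rw [aux_mem_iff_pow _ hm hcardsub]
    exact hw
  have hn0 : n0 ∈ Q₁ ⊓ N := Subgroup.mem_subgroupOf.mp hnmem
  exact Q₁.mul_mem hq hn0.1

/-- In a finite metacyclic 2-group there is at most one subgroup isomorphic to
`C_{2^k} × C_{2^k}` for each fixed `k ≥ 2`; in particular such a subgroup is normal,
i.e. its normalizer is all of `P`. -/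
theorem homocyclic_subgroup_unique (P : Type*) [Group P] [Finite P]
    (h2 : IsPGroup 2 P) (hmeta : IsMetacyclic P) (k : ℕ) (hk : 2 ≤ k)
    (Q₁ Q₂ : Subgroup P)
    (hQ₁ : Nonempty (↥Q₁ ≃* (Multiplicative (ZMod (2 ^ k)) × Multiplicative (ZMod (2 ^ k)))))
    (hQ₂ : Nonempty (↥Q₂ ≃* (Multiplicative (ZMod (2 ^ k)) × Multiplicative (ZMod (2 ^ k))))) :
    Q₁ = Q₂ ∧ Q₁.Normal ∧ Subgroup.normalizer (Q₁ : Set P) = ⊤ := by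
  have heq : Q₁ = Q₂ :=
    le_antisymm (homo_le P h2 hmeta k hk Q₂ Q₁ hQ₂ hQ₁) (homo_le P h2 hmeta k hk Q₁ Q₂ hQ₁ hQ₂)
  have hnormal : Q₁.Normal := by
    constructor
    intro x hx g
    obtain ⟨e₁⟩ := hQ₁
    have hinj : Function.Injective ⇑(MulAut.conj g).toMonoidHom := (MulAut.conj g).injective
    have hiso : Nonempty (↥(Subgroup.map (MulAut.conj g).toMonoidHom Q₁) ≃*
        (Multiplicative (ZMod (2 ^ k)) × Multiplicative (ZMod (2 ^ k)))) :=
      ⟨(Subgroup.equivMapOfInjective Q₁ _ hinj).symm.trans e₁⟩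
    have hmap : Subgroup.map (MulAut.conj g).toMonoidHom Q₁ = Q₁ :=
      le_antisymm (homo_le P h2 hmeta k hk Q₁ _ ⟨e₁⟩ hiso)
        (homo_le P h2 hmeta k hk _ Q₁ hiso ⟨e₁⟩)
    have hmem : (MulAut.conj g).toMonoidHom x ∈ Subgroup.map (MulAut.conj g).toMonoidHom Q₁ :=
      ⟨x, hx, rfl⟩
    rw [hmap] at hmem
    simpa [MulAut.conj_apply] using hmem
  exact ⟨heq, hnormal, Subgroup.normalizer_eq_top_iff.mpr hnormal⟩
end

section
/- Let P be a finite 2-group, let x ∈ P be an element such that the cyclic subgroup ⟨x⟩ is normal in P, and let Q ≤ P be an abelian subgroup with x² ∈ Q. Then the Frattini subgroup Φ(Q) centralizes x, i.e. Φ(Q) ≤ C_P(x). -/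
private lemma int_pow_aux (j : ℕ) (k : ℤ) (h1 : (2 ^ j : ℤ) ∣ 2 * (k - 1))
    (h2 : ¬ (2 ^ j : ℤ) ∣ k) : (2 ^ j : ℤ) ∣ k ^ 2 - 1 := by
  cases j with
  | zero => simp at h2
  | succ j' =>
    have hdvd : (2 ^ j' : ℤ) ∣ k - 1 := by
      have : (2 : ℤ) * 2 ^ j' ∣ 2 * (k - 1) := by
        rw [mul_comm]
        simpa [pow_succ] using h1
      exact (mul_dvd_mul_iff_left (by norm_num : (2:ℤ) ≠ 0)).mp this
    rcases Int.even_or_odd k with he | ho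
    · -- k even : then k - 1 is odd, so j' = 0 and 2 ∣ k, contradiction
      obtain ⟨t, ht⟩ := he
      have hj0 : j' = 0 := by
        by_contra hne
        have h2d : (2 : ℤ) ∣ 2 ^ j' := dvd_pow_self 2 hne
        have : (2 : ℤ) ∣ k - 1 := h2d.trans hdvd
        omega
      exfalso
      apply h2
      rw [hj0]
      omega
    · obtain ⟨t, ht⟩ := ho
      obtain ⟨c, hc⟩ := hdvd
      have : k ^ 2 - 1 = (k - 1) * (k + 1) := by ring
      rw [this, hc, ht]
      refine ⟨c * (t + 1), by ring⟩

private lemma frattini_eq_bot_of_sq (V : Type*) [Group V] [Finite V]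
    (hcomm : ∀ a b : V, a * b = b * a) (hsq : ∀ v : V, v ^ 2 = 1) :
    frattini V = ⊥ := by
  letI : CommGroup V := { (inferInstance : Group V) with mul_comm := hcomm }
  rw [eq_bot_iff]
  intro v hv
  rw [Subgroup.mem_bot]
  by_contra hv1
  -- take a subgroup maximal with respect to not containing v
  set S : Set (Subgroup V) := {M | v ∉ M} with hS
  have hbot : (⊥ : Subgroup V) ∈ S := by
    simp only [hS, Set.mem_setOf_eq, Subgroup.mem_bot]
    exact hv1
  obtain ⟨M, hMS, hMmax⟩ :=
    Set.Finite.exists_maximalFor id S (Set.toFinite S) ⟨⊥, hbot⟩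
  simp only [id] at hMmax
  replace hMmax : ∀ N ∈ S, M ≤ N → M = N := fun N hN h => le_antisymm h (hMmax hN h)
  have hcoatom : IsCoatom M := by
    constructor
    · intro htop
      exact hMS (htop ▸ Subgroup.mem_top v)
    · intro N hMN
      have hvN : v ∈ N := by
        by_contra hvN
        exact hMN.ne (hMmax N hvN hMN.le)
      rw [eq_top_iff]
      intro g _
      by_cases hgM : g ∈ M
      · exact hMN.le hgM
      · have hvsup : v ∈ M ⊔ Subgroup.zpowers g := by
          by_contra hvsup
          have := hMmax _ hvsup le_sup_left
          rw [this] at hgM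
          exact hgM (Subgroup.mem_sup_right (Subgroup.mem_zpowers g))
        obtain ⟨m, hm, z, hz, hmz⟩ := Subgroup.mem_sup.mp hvsup
        obtain ⟨c, hc⟩ := Subgroup.mem_zpowers_iff.mp hz
        rcases Int.even_or_odd c with ⟨t, ht⟩ | ⟨t, ht⟩
        · -- z = 1, so v ∈ M, contradiction
          exfalso
          apply hMS
          have hz1 : z = 1 := by
            have : g ^ (t + t) = (g ^ t) ^ 2 := by
              rw [zpow_add, sq]
            rw [← hc, ht, this, hsq]
          rw [← hmz, hz1, mul_one]
          exact hm
        · -- z = g, so g = m⁻¹ * v ∈ N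
          have hzg : z = g := by
            rw [← hc, ht, two_mul, zpow_add, zpow_add, zpow_one, ← sq, hsq, one_mul]
          have : g = m⁻¹ * v := by
            rw [← hmz, hzg]; group
          rw [this]
          exact N.mul_mem (N.inv_mem (hMN.le hm)) hvN
  exact hMS (frattini_le_coatom hcoatom hv)

/-- Let `P` be a finite 2-group, `x ∈ P` with `⟨x⟩` normal in `P`, and `Q ≤ P` an abelian
subgroup with `x² ∈ Q`.  Then the Frattini subgroup `Φ(Q)` centralizes `x`. -/
theorem frattini_centralizes (P : Type*) [Group P] [Finite P] (h2 : IsPGroup 2 P)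
    (x : P) (hx : (Subgroup.zpowers x).Normal)
    (Q : Subgroup P) (hab : ∀ a ∈ Q, ∀ b ∈ Q, a * b = b * a) (hx2 : x ^ 2 ∈ Q) :
    (frattini ↥Q).map Q.subtype ≤ Subgroup.centralizer {x} := by
  -- Step 1: every square of an element of Q centralizes x
  have key : ∀ q : ↥Q, ((q : P)) ^ 2 ∈ Subgroup.centralizer {x} := by
    intro q
    rcases eq_or_ne x 1 with rfl | hx1
    · rw [Subgroup.mem_centralizer_iff]
      intro y hy
      rw [Set.mem_singleton_iff] at hy
      simp [hy]
    obtain ⟨k, hk⟩ : ∃ k : ℤ, x ^ k = (q : P) * x * (q : P)⁻¹ :=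
      Subgroup.mem_zpowers_iff.mp (hx.conj_mem x (Subgroup.mem_zpowers x) q)
    -- q commutes with x^2
    have hq2 : (q : P) * x ^ 2 * (q : P)⁻¹ = x ^ 2 := by
      have := hab (q : P) q.2 (x ^ 2) hx2
      rw [this]; group
    -- hence x ^ (2k) = x ^ 2
    have h2k : x ^ (2 * k) = x ^ (2 : ℤ) := by
      have h22 : x ^ (2:ℤ) = x ^ (2:ℕ) := by norm_cast
      calc x ^ (2 * k) = (x ^ k) ^ (2:ℤ) := by rw [← zpow_mul, mul_comm]
        _ = (q : P) * x ^ (2:ℤ) * (q : P)⁻¹ := by rw [hk, conj_zpow]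
        _ = x ^ (2:ℤ) := by rw [h22]; exact hq2
    have hdvd : (orderOf x : ℤ) ∣ 2 * (k - 1) := by
      rw [orderOf_dvd_iff_zpow_eq_one]
      have : (2 : ℤ) * (k - 1) = 2 * k - 2 := by ring
      rw [this, zpow_sub, h2k, mul_inv_eq_one]
    -- the order of x is a power of 2
    obtain ⟨m, hm⟩ := h2 x
    have hord : orderOf x ∣ 2 ^ m := orderOf_dvd_of_pow_eq_one hm
    obtain ⟨j, _, hj⟩ := (Nat.dvd_prime_pow Nat.prime_two).mp hord
    -- x ^ k ≠ 1
    have hknd : ¬ (orderOf x : ℤ) ∣ k := by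
      rw [orderOf_dvd_iff_zpow_eq_one, hk]
      intro h
      apply hx1
      have : (q : P) * x * (q : P)⁻¹ = 1 := h
      calc x = (q : P)⁻¹ * ((q : P) * x * (q : P)⁻¹) * (q : P) := by group
        _ = 1 := by rw [this]; group
    have hdvd2 : (orderOf x : ℤ) ∣ k ^ 2 - 1 := by
      rw [hj] at hdvd hknd ⊢
      push_cast at hdvd hknd ⊢
      exact int_pow_aux j k hdvd hknd
    -- conclude q^2 centralizes x
    have hxk2 : x ^ (k * k) = x := by
      have : x ^ (k * k - 1) = 1 := by
        rw [← orderOf_dvd_iff_zpow_eq_one] at *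
        have : k * k - 1 = k ^ 2 - 1 := by ring
        rw [this]; exact hdvd2
      calc x ^ (k * k) = x ^ (k * k - 1) * x ^ (1:ℤ) := by rw [← zpow_add]; ring_nf
        _ = x := by rw [this]; group
    have hconj : ((q : P)) ^ 2 * x * (((q : P)) ^ 2)⁻¹ = x := by
      calc ((q : P)) ^ 2 * x * (((q : P)) ^ 2)⁻¹
          = (q : P) * ((q : P) * x * (q : P)⁻¹) * (q : P)⁻¹ := by
            rw [sq, mul_inv_rev]
            simp [mul_assoc]
        _ = (q : P) * x ^ k * (q : P)⁻¹ := by rw [← hk]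
        _ = ((q : P) * x * (q : P)⁻¹) ^ k := by rw [conj_zpow]
        _ = (x ^ k) ^ k := by rw [hk]
        _ = x ^ (k * k) := by rw [← zpow_mul]
        _ = x := hxk2
    rw [Subgroup.mem_centralizer_iff]
    intro y hy
    rw [Set.mem_singleton_iff] at hy
    rw [hy]
    calc x * (q : P) ^ 2 = ((q : P) ^ 2 * x * ((q : P) ^ 2)⁻¹) * (q : P) ^ 2 := by
          rw [hconj]
      _ = (q : P) ^ 2 * x := by simp [mul_assoc]
  -- Step 2: pass to the quotient by K = preimage of centralizer
  set K : Subgroup ↥Q := (Subgroup.centralizer {x}).comap Q.subtype with hK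
  haveI hKn : K.Normal := by
    constructor
    intro n hn g
    have : g * n * g⁻¹ = n := by
      have := hab (g : P) g.2 (n : P) n.2
      ext
      push_cast
      rw [this]; group
    rwa [this]
  have hfr : frattini (↥Q ⧸ K) = ⊥ := by
    apply frattini_eq_bot_of_sq
    · intro a b
      induction a using QuotientGroup.induction_on with
      | H a =>
      induction b using QuotientGroup.induction_on with
      | H b =>
        rw [← QuotientGroup.mk_mul, ← QuotientGroup.mk_mul]
        congr 1
        ext
        exact hab (a : P) a.2 (b : P) b.2
    · intro v
      induction v using QuotientGroup.induction_on with
      | H q =>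
        rw [← QuotientGroup.mk_pow, QuotientGroup.eq_one_iff]
        show (Q.subtype (q ^ 2)) ∈ Subgroup.centralizer {x}
        simpa using key q
  have hle : frattini ↥Q ≤ K := by
    have := frattini_le_comap_frattini_of_surjective
      (QuotientGroup.mk'_surjective K)
    rw [hfr] at this
    intro a ha
    have := this ha
    rw [Subgroup.mem_comap, Subgroup.mem_bot, ← MonoidHom.mem_ker,
      QuotientGroup.ker_mk'] at this
    exact this
  calc (frattini ↥Q).map Q.subtype ≤ K.map Q.subtype := Subgroup.map_mono hle
    _ ≤ Subgroup.centralizer {x} := by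
        rw [hK]
        exact Subgroup.map_comap_le _ _
end
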